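/- Let κ be an infinite cardinal and suppose for each x in a linear order L we have a decreasing function g_x : κ → M into a linear order M with finite range, such that x ↦ g_x is order-preserving for the lexicographic order on functions κ → M. If for every n ∈ ω the set of possible 'trace sequences' σ(x) (the finite alternating sequence of distinct values of g_x and the ordinals where each value first appears) of length ≤ 2n+1 forms a σ-well-ordered order under the order 'σ < τ iff τ is a proper initial segment of σ or σ <_lex τ', then L is σ-well-ordered. -/

import Mathlib

open Set

/-- A set `s` is σ-well-ordered with respect to a relation `r`: it is a countable
union of subsets on each of which `r` is well-founded (hence, for a total `r`,
well-ordered). -/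
def SigmaWellOrderedRel {β : Type*} (r : β → β → Prop) (s : Set β) : Prop :=
  ∃ A : ℕ → Set β, (∀ n, A n ⊆ s ∧ (A n).WellFoundedOn r) ∧ (⋃ n, A n) = s

/-- `L` is σ-well-ordered. -/
def IsSigmaWellOrdered (L : Type*) [LinearOrder L] : Prop :=
  ∃ A : ℕ → Set L, (∀ n, (A n).IsWF) ∧ (⋃ n, A n) = Set.univ

/-- The order on finite sequences: `σ < τ` iff `τ` is a proper initial segment of
`σ`, or `σ` is lexicographically smaller than `τ`. -/
def SeqLT' {β : Type*} (r : β → β → Prop) (σ τ : List β) : Prop :=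
  (τ <+: σ ∧ σ ≠ τ) ∨
    ∃ (c : List β) (a b : β) (s t : List β), r a b ∧ σ = c ++ a :: s ∧ τ = c ++ b :: t

/-- The lexicographic order on functions `ι → M`. -/
def FunLexLT {ι M : Type*} [LinearOrder ι] [LinearOrder M] (f g : ι → M) : Prop :=
  ∃ i : ι, (∀ j, j < i → f j = g j) ∧ f i < g i

namespace SigmaTraceAux

open List

variable {ι M : Type*} [LinearOrder ι] [LinearOrder M]

def trace (n : ℕ) (z : Fin (n + 1) → M) (ξ : Fin (n + 1) → ι) : List (M ⊕ ι) :=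
  Sum.inl (z 0) ::
    (List.finRange n).flatMap (fun i => [Sum.inr (ξ i.succ), Sum.inl (z i.succ)])

omit [LinearOrder ι] [LinearOrder M] in
lemma take_finRange {m n : ℕ} (h : m ≤ n) :
    (List.finRange n).take m = (List.finRange m).map (Fin.castLE h) := by
  apply List.ext_getElem
  · simp [h]
  · intro q h1 h2; simp

def tracePrefix (n : ℕ) (z : Fin (n + 1) → M) (ξ : Fin (n + 1) → ι) (m : ℕ) (h : m ≤ n) :
    List (M ⊕ ι) :=
  Sum.inl (z 0) ::
    (List.finRange m).flatMap
      (fun k => [Sum.inr (ξ (Fin.castLE h k).succ), Sum.inl (z (Fin.castLE h k).succ)])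

omit [LinearOrder ι] [LinearOrder M] in
lemma trace_decomp (n : ℕ) (z : Fin (n + 1) → M) (ξ : Fin (n + 1) → ι) (m : ℕ) (h : m < n) :
    trace n z ξ = tracePrefix n z ξ m h.le ++
      Sum.inr (ξ ⟨m + 1, by omega⟩) :: Sum.inl (z ⟨m + 1, by omega⟩) ::
        ((List.finRange n).drop (m + 1)).flatMap
          (fun i => [Sum.inr (ξ i.succ), Sum.inl (z i.succ)]) := by
  unfold trace tracePrefix
  conv_lhs => rw [← List.take_append_drop m (List.finRange n)]
  rw [List.flatMap_append, List.drop_eq_getElem_cons (by simpa using h), List.flatMap_cons,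
      take_finRange h.le, List.flatMap_map]
  simp only [List.getElem_finRange, List.cons_append, Fin.cast_mk, Function.comp_def,
    List.nil_append]
  rfl

omit [LinearOrder ι] [LinearOrder M] in
lemma trace_eq_prefix (n : ℕ) (z : Fin (n + 1) → M) (ξ : Fin (n + 1) → ι) :
    trace n z ξ = tracePrefix n z ξ n le_rfl := by
  unfold trace tracePrefix
  congr 1

omit [LinearOrder ι] [LinearOrder M] in
lemma tracePrefix_eq {nx ny : ℕ} (zx : Fin (nx + 1) → M) (ξx : Fin (nx + 1) → ι)
    (zy : Fin (ny + 1) → M) (ξy : Fin (ny + 1) → ι) (m : ℕ) (hx : m ≤ nx) (hy : m ≤ ny)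
    (hz : ∀ k : ℕ, (hk : k ≤ m) → zx ⟨k, by omega⟩ = zy ⟨k, by omega⟩)
    (hξ : ∀ k : ℕ, (hk0 : 1 ≤ k) → (hk : k ≤ m) → ξx ⟨k, by omega⟩ = ξy ⟨k, by omega⟩) :
    tracePrefix nx zx ξx m hx = tracePrefix ny zy ξy m hy := by
  unfold tracePrefix
  congr 1
  · have := hz 0 (by omega)
    rw [show (⟨0, by omega⟩ : Fin (nx+1)) = 0 from Fin.ext rfl,
        show (⟨0, by omega⟩ : Fin (ny+1)) = 0 from Fin.ext rfl] at this
    rw [this]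
  · congr 1
    funext k
    have h1 : (Fin.castLE hx k).succ = (⟨(k : ℕ) + 1, by omega⟩ : Fin (nx + 1)) :=
      Fin.ext rfl
    have h2 : (Fin.castLE hy k).succ = (⟨(k : ℕ) + 1, by omega⟩ : Fin (ny + 1)) :=
      Fin.ext rfl
    rw [h1, h2, hξ ((k : ℕ) + 1) (by omega) (by omega), hz ((k : ℕ) + 1) (by omega)]

lemma xi_strictMono {n : ℕ} (f : ι → M) (hdf : ∀ a b : ι, a ≤ b → f b ≤ f a)
    (z : Fin (n + 1) → M) (ξ : Fin (n + 1) → ι) (hza : StrictAnti z)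
    (hξ1 : ∀ k, f (ξ k) = z k) : StrictMono ξ := by
  intro a b hab
  by_contra hle
  push_neg at hle
  have h1 : f (ξ a) ≤ f (ξ b) := hdf _ _ hle
  rw [hξ1, hξ1] at h1
  exact absurd (hza hab) (not_lt.mpr h1)

lemma card_le {n n' : ℕ} (i : ι) (f h : ι → M)
    (heq : ∀ j, j < i → f j = h j)
    (z : Fin (n + 1) → M) (ξ : Fin (n + 1) → ι)
    (z' : Fin (n' + 1) → M)
    (hza : StrictAnti z) (hz'a : StrictAnti z')
    (hr' : Set.range h = Set.range z')
    (hξ1 : ∀ k, f (ξ k) = z k)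
    (hξm : StrictMono ξ)
    (k : Fin (n + 1)) (l : Fin (n' + 1))
    (hzz : z k = z' l) (hki : ξ k < i) :
    (k : ℕ) ≤ (l : ℕ) := by
  have hstep : ∀ m : Fin (k : ℕ), ∃ c : Fin (n' + 1),
      z' c = z ⟨(m : ℕ), by omega⟩ ∧ (c : ℕ) < (l : ℕ) := by
    intro m
    set km : Fin (n + 1) := ⟨(m : ℕ), by omega⟩ with hkm
    have hmk : km < k := by simpa [hkm, Fin.lt_def] using m.2
    have hlt2 : ξ km < i := (hξm hmk).trans hki
    have hmem : h (ξ km) ∈ Set.range z' := by rw [← hr']; exact ⟨_, rfl⟩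
    obtain ⟨c, hc⟩ := hmem
    have hc' : z' c = z km := by rw [hc, ← heq _ hlt2, hξ1]
    refine ⟨c, hc', ?_⟩
    have hz1 : z' l < z' c := by rw [hc', ← hzz]; exact hza hmk
    exact hz'a.lt_iff_gt.mp hz1
  choose φ hφ1 hφ2 using hstep
  have hinj : Function.Injective (fun m : Fin (k : ℕ) => (⟨(φ m : ℕ), hφ2 m⟩ : Fin (l : ℕ))) := by
    intro a b hab
    simp only [Fin.mk.injEq] at hab
    have h1 : z ⟨(a : ℕ), by omega⟩ = z ⟨(b : ℕ), by omega⟩ := by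
      rw [← hφ1 a, ← hφ1 b]
      exact congrArg z' (Fin.ext hab)
    have := hza.injective h1
    exact Fin.ext (by simpa [Fin.ext_iff] using this)
  simpa using Fintype.card_le_of_injective _ hinj

lemma match_lemma {n n' : ℕ} (i : ι) (f h : ι → M)
    (hdf : ∀ a b : ι, a ≤ b → f b ≤ f a) (hdh : ∀ a b : ι, a ≤ b → h b ≤ h a)
    (heq : ∀ j, j < i → f j = h j)
    (z : Fin (n + 1) → M) (ξ : Fin (n + 1) → ι)
    (z' : Fin (n' + 1) → M) (ξ' : Fin (n' + 1) → ι)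
    (hza : StrictAnti z) (hz'a : StrictAnti z')
    (hr : Set.range f = Set.range z) (hr' : Set.range h = Set.range z')
    (hξ : ∀ k, f (ξ k) = z k ∧ ∀ j, j < ξ k → f j ≠ z k)
    (hξ' : ∀ l, h (ξ' l) = z' l ∧ ∀ j, j < ξ' l → h j ≠ z' l)
    (k : Fin (n + 1)) (hki : ξ k < i) :
    ∃ hk : (k : ℕ) ≤ n',
      ξ' ⟨(k : ℕ), Nat.lt_succ_of_le hk⟩ = ξ k ∧ z' ⟨(k : ℕ), Nat.lt_succ_of_le hk⟩ = z k := by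
  have hξm : StrictMono ξ := xi_strictMono f hdf z ξ hza fun k => (hξ k).1
  have hξ'm : StrictMono ξ' := xi_strictMono h hdh z' ξ' hz'a fun l => (hξ' l).1
  have hmem : h (ξ k) ∈ Set.range z' := by rw [← hr']; exact ⟨_, rfl⟩
  obtain ⟨l, hl⟩ := hmem
  have hlk : z' l = z k := by rw [hl, ← heq _ hki, (hξ k).1]
  have hl_le : ξ' l ≤ ξ k := not_lt.mp fun hc => (hξ' l).2 _ hc hl.symm
  have hl_ge : ξ k ≤ ξ' l := by
    have hfl : f (ξ' l) = z k := by
      rw [heq _ (hl_le.trans_lt hki), (hξ' l).1]; exact hlk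
    exact not_lt.mp fun hc => (hξ k).2 _ hc hfl
  have hl_eq : ξ' l = ξ k := le_antisymm hl_le hl_ge
  have hk_le_l : (k : ℕ) ≤ (l : ℕ) :=
    card_le i f h heq z ξ z' hza hz'a hr' (fun k => (hξ k).1) hξm k l hlk.symm hki
  have hl_le_k : (l : ℕ) ≤ (k : ℕ) :=
    card_le i h f (fun j hj => (heq j hj).symm) z' ξ' z hz'a hza hr
      (fun l => (hξ' l).1) hξ'm l k hlk (by rw [hl_eq]; exact hki)
  have hlk' : (l : ℕ) = (k : ℕ) := le_antisymm hl_le_k hk_le_l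
  have hkn' : (k : ℕ) ≤ n' := by have := l.2; omega
  have hfin : (⟨(k : ℕ), Nat.lt_succ_of_le hkn'⟩ : Fin (n' + 1)) = l :=
    Fin.ext (by simp [hlk'])
  exact ⟨hkn', by rw [hfin]; exact hl_eq, by rw [hfin]; exact hlk⟩

lemma key {nx ny : ℕ} (i : ι) (f h : ι → M)
    (hdf : ∀ a b : ι, a ≤ b → f b ≤ f a) (hdh : ∀ a b : ι, a ≤ b → h b ≤ h a)
    (heq : ∀ j, j < i → f j = h j) (hlt : f i < h i)
    (zx : Fin (nx + 1) → M) (ξx : Fin (nx + 1) → ι)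
    (zy : Fin (ny + 1) → M) (ξy : Fin (ny + 1) → ι)
    (hzxa : StrictAnti zx) (hzya : StrictAnti zy)
    (hrx : Set.range f = Set.range zx) (hry : Set.range h = Set.range zy)
    (hξx : ∀ k, f (ξx k) = zx k ∧ ∀ j, j < ξx k → f j ≠ zx k)
    (hξy : ∀ l, h (ξy l) = zy l ∧ ∀ j, j < ξy l → h j ≠ zy l) :
    SeqLT' (Sum.Lex ((· < ·) : M → M → Prop) ((· < ·) : ι → ι → Prop))
      (trace nx zx ξx) (trace ny zy ξy) := by
  classical
  have heq' : ∀ j, j < i → h j = f j := fun j hj => (heq j hj).symm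
  have hξxm : StrictMono ξx := xi_strictMono f hdf zx ξx hzxa fun k => (hξx k).1
  have hmatch : ∀ k : Fin (nx + 1), ξx k < i →
      ∃ hk : (k : ℕ) ≤ ny,
        ξy ⟨(k : ℕ), Nat.lt_succ_of_le hk⟩ = ξx k ∧
        zy ⟨(k : ℕ), Nat.lt_succ_of_le hk⟩ = zx k :=
    fun k hk => match_lemma i f h hdf hdh heq zx ξx zy ξy hzxa hzya hrx hry hξx hξy k hk
  have hmatch' : ∀ l : Fin (ny + 1), ξy l < i →
      ∃ hl : (l : ℕ) ≤ nx,
        ξx ⟨(l : ℕ), Nat.lt_succ_of_le hl⟩ = ξy l ∧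
        zx ⟨(l : ℕ), Nat.lt_succ_of_le hl⟩ = zy l :=
    fun l hl => match_lemma i h f hdh hdf heq' zy ξy zx ξx hzya hzxa hry hrx hξy hξx l hl
  have hex : ∃ kk : ℕ, ¬ ∃ hk : kk ≤ nx, ξx ⟨kk, Nat.lt_succ_of_le hk⟩ < i :=
    ⟨nx + 1, fun ⟨hk, _⟩ => by omega⟩
  have hPm := Nat.find_spec hex
  have hPlt : ∀ kk : ℕ, kk < Nat.find hex →
      ∃ hk : kk ≤ nx, ξx ⟨kk, Nat.lt_succ_of_le hk⟩ < i :=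
    fun kk hkk => not_not.mp (Nat.find_min hex hkk)
  rcases hfind : Nat.find hex with _ | m'
  · -- m = 0 : the traces differ at the very first entry
    rw [hfind] at hPm
    have h0 : ¬ ξx 0 < i := by
      intro hc
      exact hPm ⟨Nat.zero_le nx, by rw [show (⟨0, _⟩ : Fin (nx+1)) = 0 from Fin.ext rfl]; exact hc⟩
    have hfi : f i = zx 0 := by
      obtain ⟨p, hp⟩ : f i ∈ Set.range zx := hrx ▸ ⟨i, rfl⟩
      have hpi : ξx p ≤ i := not_lt.mp fun hc => (hξx p).2 i hc hp.symm
      have hp0 : p = 0 := by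
        by_contra hne
        have h0p : (0 : Fin (nx + 1)) < p := Fin.pos_of_ne_zero hne
        exact absurd ((hξxm h0p).trans_le (hpi.trans (not_lt.mp h0))) (lt_irrefl _)
      rw [← hp, hp0]
    have h0y : ¬ ξy 0 < i := by
      intro hc
      obtain ⟨hl, hxy0, _⟩ := hmatch' 0 hc
      refine h0 ?_
      rw [show (0 : Fin (nx+1)) = ⟨((0 : Fin (ny+1)) : ℕ), Nat.lt_succ_of_le hl⟩ from
        Fin.ext (by simp), hxy0]
      exact hc
    have hhi : h i = zy 0 := by
      obtain ⟨p, hp⟩ : h i ∈ Set.range zy := hry ▸ ⟨i, rfl⟩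
      have hξym : StrictMono ξy := xi_strictMono h hdh zy ξy hzya fun l => (hξy l).1
      have hpi : ξy p ≤ i := not_lt.mp fun hc => (hξy p).2 i hc hp.symm
      have hp0 : p = 0 := by
        by_contra hne
        have h0p : (0 : Fin (ny + 1)) < p := Fin.pos_of_ne_zero hne
        exact absurd ((hξym h0p).trans_le (hpi.trans (not_lt.mp h0y))) (lt_irrefl _)
      rw [← hp, hp0]
    refine Or.inr ⟨[], Sum.inl (zx 0), Sum.inl (zy 0),
      (List.finRange nx).flatMap (fun i => [Sum.inr (ξx i.succ), Sum.inl (zx i.succ)]),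
      (List.finRange ny).flatMap (fun i => [Sum.inr (ξy i.succ), Sum.inl (zy i.succ)]),
      Sum.Lex.inl (by rw [← hfi, ← hhi]; exact hlt), ?_, ?_⟩
    · rw [List.nil_append]; rfl
    · rw [List.nil_append]; rfl
  · -- m = m' + 1
    rw [hfind] at hPm
    obtain ⟨hm'x, hξm'i⟩ := hPlt m' (by omega)
    have hkx : ∀ k : ℕ, k ≤ m' → k ≤ nx := fun k hk => le_trans hk hm'x
    have hky : ∀ k : ℕ, k ≤ m' → k ≤ ny := by
      intro k hk
      obtain ⟨hk', hξi⟩ := hPlt k (by omega)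
      obtain ⟨h1, _, _⟩ := hmatch ⟨k, Nat.lt_succ_of_le hk'⟩ hξi
      exact h1
    have hmξ : ∀ k : ℕ, (h1 : k ≤ m') →
        ξy ⟨k, Nat.lt_succ_of_le (hky k h1)⟩ = ξx ⟨k, Nat.lt_succ_of_le (hkx k h1)⟩ ∧
        zy ⟨k, Nat.lt_succ_of_le (hky k h1)⟩ = zx ⟨k, Nat.lt_succ_of_le (hkx k h1)⟩ := by
      intro k h1
      obtain ⟨hk', hξi⟩ := hPlt k (by omega)
      obtain ⟨h2, h3, h4⟩ := hmatch ⟨k, Nat.lt_succ_of_le hk'⟩ hξi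
      exact ⟨h3, h4⟩
    have hm'y : m' ≤ ny := hky m' le_rfl
    have hyi : h i ≤ zy ⟨m', Nat.lt_succ_of_le hm'y⟩ := by
      have h6 : ξy ⟨m', Nat.lt_succ_of_le hm'y⟩ ≤ i := by
        rw [(hmξ m' le_rfl).1]; exact hξm'i.le
      calc h i ≤ h (ξy ⟨m', Nat.lt_succ_of_le hm'y⟩) := hdh _ _ h6
        _ = zy ⟨m', Nat.lt_succ_of_le hm'y⟩ := (hξy _).1
    have hfi_lt : f i < zx ⟨m', Nat.lt_succ_of_le hm'x⟩ := by
      calc f i < h i := hlt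
        _ ≤ zy ⟨m', Nat.lt_succ_of_le hm'y⟩ := hyi
        _ = zx ⟨m', Nat.lt_succ_of_le hm'x⟩ := (hmξ m' le_rfl).2
    obtain ⟨p, hp⟩ : f i ∈ Set.range zx := hrx ▸ ⟨i, rfl⟩
    have hpi : ξx p ≤ i := not_lt.mp fun hc => (hξx p).2 i hc hp.symm
    have hm'p : (⟨m', Nat.lt_succ_of_le hm'x⟩ : Fin (nx + 1)) < p := by
      apply hzxa.lt_iff_gt.mp
      rw [hp]; exact hfi_lt
    have hmx : m' + 1 ≤ nx := by
      have h7 := p.2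
      have h8 : m' < (p : ℕ) := hm'p
      omega
    have hxm_not : ¬ ξx ⟨m' + 1, Nat.lt_succ_of_le hmx⟩ < i := fun hc => hPm ⟨hmx, hc⟩
    have hξxm_eq : ξx ⟨m' + 1, Nat.lt_succ_of_le hmx⟩ = i := by
      have h7 : (⟨m' + 1, Nat.lt_succ_of_le hmx⟩ : Fin (nx + 1)) ≤ p := by
        have h8 : m' < (p : ℕ) := hm'p
        exact Fin.mk_le_of_le_val (by omega)
      exact le_antisymm ((hξxm.monotone h7).trans hpi) (not_lt.mp hxm_not)
    have hp_eq : p = ⟨m' + 1, Nat.lt_succ_of_le hmx⟩ := by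
      have h9 : ξx p ≤ ξx ⟨m' + 1, Nat.lt_succ_of_le hmx⟩ := by
        rw [hξxm_eq]; exact hpi
      have h10 : p ≤ ⟨m' + 1, Nat.lt_succ_of_le hmx⟩ := hξxm.le_iff_le.mp h9
      refine le_antisymm h10 ?_
      have h8 : m' < (p : ℕ) := hm'p
      exact Fin.mk_le_of_le_val (by omega)
    have hfi : f i = zx ⟨m' + 1, Nat.lt_succ_of_le hmx⟩ := by rw [← hp, hp_eq]
    have hdx := trace_decomp nx zx ξx m' (by omega)
    have hpre : tracePrefix nx zx ξx m' hm'x = tracePrefix ny zy ξy m' hm'y :=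
      tracePrefix_eq zx ξx zy ξy m' hm'x hm'y
        (fun k hk => ((hmξ k hk).2).symm)
        (fun k hk0 hk => ((hmξ k hk).1).symm)
    rcases le_or_gt ny m' with hny | hny
    · -- σ y is a proper initial segment of σ x
      have hnym : ny = m' := le_antisymm hny hm'y
      subst hnym
      have hty : trace ny zy ξy = tracePrefix ny zy ξy ny le_rfl := trace_eq_prefix ny zy ξy
      have htyp : trace ny zy ξy = tracePrefix nx zx ξx ny hm'x := by rw [hty, hpre]
      refine Or.inl ⟨⟨Sum.inr (ξx ⟨ny + 1, by omega⟩) :: Sum.inl (zx ⟨ny + 1, by omega⟩) ::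
          ((List.finRange nx).drop (ny + 1)).flatMap
            (fun i => [Sum.inr (ξx i.succ), Sum.inl (zx i.succ)]), ?_⟩, ?_⟩
      · rw [htyp]
        exact hdx.symm
      · rw [htyp, hdx]
        intro hcontra
        have hlen := congrArg List.length hcontra
        simp at hlen
    · have hm1y : m' + 1 ≤ ny := hny
      have hdy := trace_decomp ny zy ξy m' (by omega)
      have hynot : ¬ ξy ⟨m' + 1, Nat.lt_succ_of_le hm1y⟩ < i := by
        intro hc
        obtain ⟨h9, h10, _⟩ := hmatch' ⟨m' + 1, Nat.lt_succ_of_le hm1y⟩ hc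
        refine hxm_not ?_
        rw [show (⟨m' + 1, Nat.lt_succ_of_le hmx⟩ : Fin (nx + 1)) =
          ⟨((⟨m' + 1, Nat.lt_succ_of_le hm1y⟩ : Fin (ny + 1)) : ℕ), Nat.lt_succ_of_le h9⟩ from
          Fin.ext rfl, h10]
        exact hc
      rcases eq_or_lt_of_le (not_lt.mp hynot) with hy_eq | hy_lt
      · -- the values at i differ
        have hhi : h i = zy ⟨m' + 1, Nat.lt_succ_of_le hm1y⟩ := by
          rw [hy_eq]; exact (hξy _).1
        refine Or.inr ⟨tracePrefix nx zx ξx m' hm'x ++ [Sum.inr i],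
          Sum.inl (zx ⟨m' + 1, Nat.lt_succ_of_le hmx⟩),
          Sum.inl (zy ⟨m' + 1, Nat.lt_succ_of_le hm1y⟩),
          ((List.finRange nx).drop (m' + 1)).flatMap
            (fun i => [Sum.inr (ξx i.succ), Sum.inl (zx i.succ)]),
          ((List.finRange ny).drop (m' + 1)).flatMap
            (fun i => [Sum.inr (ξy i.succ), Sum.inl (zy i.succ)]),
          Sum.Lex.inl (by rw [← hfi, ← hhi]; exact hlt), ?_, ?_⟩
        · rw [hdx, hξxm_eq]
          simp [List.append_assoc]
        · rw [hdy, ← hy_eq, ← hpre]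
          simp [List.append_assoc]
      · -- the first-appearance ordinals differ
        refine Or.inr ⟨tracePrefix nx zx ξx m' hm'x, Sum.inr i,
          Sum.inr (ξy ⟨m' + 1, Nat.lt_succ_of_le hm1y⟩),
          Sum.inl (zx ⟨m' + 1, by omega⟩) :: ((List.finRange nx).drop (m' + 1)).flatMap
            (fun i => [Sum.inr (ξx i.succ), Sum.inl (zx i.succ)]),
          Sum.inl (zy ⟨m' + 1, by omega⟩) :: ((List.finRange ny).drop (m' + 1)).flatMap
            (fun i => [Sum.inr (ξy i.succ), Sum.inl (zy i.succ)]),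
          Sum.Lex.inr hy_lt, ?_, ?_⟩
        · rw [hdx, hξxm_eq]
        · rw [hdy, ← hpre]

lemma wf_pullback {α β : Type*} {r : α → α → Prop} {r' : β → β → Prop} {s : Set α} {t : Set β}
    (F : α → β) (hmaps : ∀ a ∈ s, F a ∈ t)
    (hrel : ∀ a b : α, r a b → r' (F a) (F b))
    (ht : t.WellFoundedOn r') : s.WellFoundedOn r := by
  have hwf : WellFounded (fun a b : s => r' (F a) (F b)) :=
    InvImage.wf (fun a : s => (⟨F a, hmaps a a.2⟩ : t)) ht
  exact Subrelation.wf (fun {a b} hab => hrel a b hab) hwf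

omit [LinearOrder ι] [LinearOrder M] in
lemma trace_length (n : ℕ) (z : Fin (n + 1) → M) (ξ : Fin (n + 1) → ι) :
    (trace n z ξ).length = 2 * n + 1 := by
  unfold trace
  rw [List.length_cons, List.length_flatMap]
  simp only [Function.comp_def, List.length_cons, List.length_nil]
  rw [List.map_const', List.sum_replicate, List.length_finRange, smul_eq_mul]
  omega

end SigmaTraceAux

/-- The combinatorial core of Lemma 2.8: suppose `κ` is an infinite cardinal,
realized as a well-ordered index type `ι` of order type `κ`, and to each `x ∈ L`
is attached a decreasing function `g x : ι → M` with finite range such that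
`x ↦ g x` is order-preserving for the lexicographic order on functions.  Let
`σ x` be the trace sequence of `x`: the alternating finite sequence
`⟨z₀, ξ₁, z₁, …, ξₙ, zₙ⟩` of the distinct values of `g x` (in their decreasing
order) and of the least indices where each value appears.  If for every `n` the
set of truncated traces of length at most `2n+1` is σ-well-ordered under the
order `σ < τ iff τ is a proper initial segment of σ or σ <_lex τ`, then `L`
is σ-well-ordered. -/
theorem sigmaWellOrdered_of_traces
    (κ : Cardinal.{0}) (hκ : Cardinal.aleph0 ≤ κ)
    (ι : Type) [LinearOrder ι] [WellFoundedLT ι]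
    (hι : Ordinal.type ((· < ·) : ι → ι → Prop) = κ.ord)
    (L M : Type*) [LinearOrder L] [LinearOrder M]
    (g : L → ι → M)
    (hdec : ∀ x : L, ∀ i j : ι, i ≤ j → g x j ≤ g x i)
    (hfin : ∀ x : L, (Set.range (g x)).Finite)
    (hmono : ∀ x y : L, x < y → FunLexLT (g x) (g y))
    (σ : L → List (M ⊕ ι))
    (hσ : ∀ x : L, ∃ (n : ℕ) (z : Fin (n + 1) → M) (ξ : Fin (n + 1) → ι),
      StrictAnti z ∧ Set.range (g x) = Set.range z ∧
      (∀ i, g x (ξ i) = z i ∧ ∀ j : ι, j < ξ i → g x j ≠ z i) ∧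
      σ x = Sum.inl (z 0) ::
        (List.finRange n).flatMap (fun i => [Sum.inr (ξ i.succ), Sum.inl (z i.succ)]))
    (hU : ∀ n : ℕ, SigmaWellOrderedRel
      (SeqLT' (Sum.Lex (· < ·) (· < ·)))
      {l : List (M ⊕ ι) | ∃ x : L, l = (σ x).take (2 * n + 1)}) :
    IsSigmaWellOrdered L := by
  classical
  choose n z ξ hza hr hξ hσeq using hσ
  have key : ∀ x y : L, x < y →
      SeqLT' (Sum.Lex ((· < ·) : M → M → Prop) ((· < ·) : ι → ι → Prop)) (σ x) (σ y) := by
    intro x y hxy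
    obtain ⟨i, hieq, hilt⟩ := hmono x y hxy
    rw [hσeq x, hσeq y]
    exact SigmaTraceAux.key i (g x) (g y) (hdec x) (hdec y) hieq hilt
      (z x) (ξ x) (z y) (ξ y) (hza x) (hza y) (hr x) (hr y) (hξ x) (hξ y)
  choose 𝒜 h𝒜 hUeq using hU
  have hlen : ∀ x : L, (σ x).length = 2 * n x + 1 := by
    intro x
    rw [hσeq x]
    exact SigmaTraceAux.trace_length (n x) (z x) (ξ x)
  refine ⟨fun p => {x : L | (σ x).length ≤ 2 * p.unpair.1 + 1 ∧ σ x ∈ 𝒜 p.unpair.1 p.unpair.2},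
    ?_, ?_⟩
  · intro p
    exact SigmaTraceAux.wf_pullback σ (fun a ha => ha.2) (fun a b hab => key a b hab)
      (h𝒜 p.unpair.1 p.unpair.2).2
  · apply Set.eq_univ_of_forall
    intro x
    have h1 : σ x ∈ ⋃ k, 𝒜 (n x) k := by
      rw [hUeq (n x)]
      exact ⟨x, (List.take_of_length_le (hlen x).le).symm⟩
    obtain ⟨k, hk⟩ := Set.mem_iUnion.mp h1
    exact Set.mem_iUnion.mpr ⟨Nat.pair (n x) k, by
      simp only [Set.mem_setOf_eq, Nat.unpair_pair]
      exact ⟨(hlen x).le, hk⟩⟩
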